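/- Let C be an unaryless c-tree and D its head-ordered dependency projection. Then for every position h, the number of proper nodes of C whose lexical head is h equals the number of equivalence classes of the weak order ≼_h on M_h in D (in particular it equals 0 when M_h is empty, and for a binary c-tree it equals |M_h|). -/

import Mathlib

/-- A node of a constituent tree: either a pre-terminal over position `i`
(standing for the pre-terminal `(p_i, i, {i})` together with its leaf child `i`),
or a proper node `node Z h cs` with label `Z`, lexical head `h` and children `cs`. -/
inductive CNode (L : ℕ) (Sg : Type) : Type where
  | pre  : Fin L → CNode L Sg
  | node : Sg → Fin L → List (CNode L Sg) → CNode L Sg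

namespace CNode

variable {L : ℕ} {Sg : Type}

/-- The lexical head of a node. -/
def head : CNode L Sg → Fin L
  | pre i => i
  | node _ h _ => h

mutual
  /-- The yield of a node. -/
  def yield : CNode L Sg → Finset (Fin L)
    | pre i => {i}
    | node _ _ cs => yieldList cs
  def yieldList : List (CNode L Sg) → Finset (Fin L)
    | [] => ∅
    | c :: cs => yield c ∪ yieldList cs
end

mutual
  /-- The list of all subtrees (nodes) of a tree, including itself. -/
  def subs : CNode L Sg → List (CNode L Sg)
    | pre i => [pre i]
    | node Z h cs => node Z h cs :: subsList cs
  def subsList : List (CNode L Sg) → List (CNode L Sg)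
    | [] => []
    | c :: cs => subs c ++ subsList cs
end

/-- Well-formedness of a c-tree: children have pairwise disjoint yields and
every proper node has exactly one child whose head is the node's head. -/
inductive Valid : CNode L Sg → Prop where
  | pre (i : Fin L) : Valid (pre i)
  | node (Z : Sg) (h : Fin L) (cs : List (CNode L Sg)) :
      (∀ c ∈ cs, Valid c) →
      cs.Pairwise (fun a b => Disjoint a.yield b.yield) →
      (∃! c, c ∈ cs ∧ head c = h) →
      Valid (node Z h cs)

/-- A c-tree on positions `1,…,L`: a well-formed tree whose leaves are exactly
the `L` positions, each appearing exactly once. -/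
def IsCTree (t : CNode L Sg) : Prop := Valid t ∧ t.yield = Finset.univ

/-- Every proper node has exactly two children. -/
def Binary (t : CNode L Sg) : Prop :=
  ∀ s ∈ t.subs, ∀ Z h cs, s = node Z h cs → cs.length = 2

/-- No proper node has exactly one child. -/
def Unaryless (t : CNode L Sg) : Prop :=
  ∀ s ∈ t.subs, ∀ Z h cs, s = node Z h cs → cs.length ≠ 1

/-- Every node's yield is an interval of consecutive positions. -/
def Continuous (t : CNode L Sg) : Prop :=
  ∀ s ∈ t.subs, ∃ a b : Fin L, s.yield = Finset.Icc a b

/-- `AttachesAt C h m Z n`: `n` is a proper node of `C` with label `Z` and lexical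
head `h`, having a (non-head) child whose lexical head is `m ≠ h`;
i.e. the modifier `m` attaches to `h` at the spine node `n`, generating an arc
`(h, m)` labeled `Z`. -/
def AttachesAt (C : CNode L Sg) (h m : Fin L) (Z : Sg) (n : CNode L Sg) : Prop :=
  n ∈ C.subs ∧ ∃ cs, n = node Z h cs ∧ m ≠ h ∧ ∃ c ∈ cs, head c = m

/-- A proper node with head `h` having at least one non-head child
(i.e. a node of `h`'s spine at which some modifier attaches). -/
def attachB (h : Fin L) : CNode L Sg → Bool
  | pre _ => false
  | node _ h' cs => h' = h && cs.any (fun c => head c != h)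

/-- The position, counted from the bottom of the spine of `h`, of the spine node `n`:
the number of proper nodes with head `h` lying weakly below `n` at which modifiers
attach.  This is the order index (`#1, #2, …`) of the attachment event at `n`. -/
def spineIdx (h : Fin L) (n : CNode L Sg) : ℕ :=
  n.subs.countP (attachB h)

end CNode

/-- An ordered, labeled dependency tree on positions `{1,…,L}` with labels in `Sg`:
`par m = some (h, ℓ, j)` means there is an arc from head `h` to modifier `m`,
carrying label `ℓ` and order index `j` (the position of the attachment event of `m`
in the order of `h`'s modifiers). -/
structure ODTree (L : ℕ) (Sg : Type) : Type where
  root : Fin L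
  par : Fin L → Option (Fin L × Sg × ℕ)
  root_par : par root = none
  reach : ∀ v : Fin L, Relation.ReflTransGen (fun a b => (par b).map (·.1) = some a) root v

namespace ODTree

variable {L : ℕ} {Sg : Type}

/-- The arc relation: `h` is the head of `m`. -/
def arc (D : ODTree L Sg) (h m : Fin L) : Prop := (D.par m).map (·.1) = some h

/-- `D` is a weakly ordered d-tree: for each head, the order indices of its modifiers
are exactly `1, …, J` for some `J` (so they canonically encode a total preorder, i.e.
weak order, on the modifiers), and equivalent modifiers (same index) carry the same
label. -/
def WeaklyOrdered (D : ODTree L Sg) : Prop :=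
  (∀ m h ℓ j, D.par m = some (h, ℓ, j) →
     1 ≤ j ∧ ∀ k, 1 ≤ k → k < j → ∃ m' ℓ', D.par m' = some (h, ℓ', k)) ∧
  (∀ m m' h ℓ ℓ' j, D.par m = some (h, ℓ, j) → D.par m' = some (h, ℓ', j) → ℓ = ℓ')

/-- `D` is a strictly ordered d-tree: additionally, no two modifiers of the same head
share an index, so the indices encode a strict total order on the modifiers. -/
def StrictlyOrdered (D : ODTree L Sg) : Prop :=
  WeaklyOrdered D ∧
  ∀ m m' h ℓ ℓ' j, D.par m = some (h, ℓ, j) → D.par m' = some (h, ℓ', j) → m = m'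

/-- Projectivity: for every arc `(h,m)`, every position strictly between `h` and `m`
is reachable from `h` by a directed path. -/
def Projective (D : ODTree L Sg) : Prop :=
  ∀ h m, D.arc h m → ∀ d : Fin L, min h m < d → d < max h m →
    Relation.ReflTransGen D.arc h d

/-- The nesting property (for weak orders): closer modifiers on the same side of the
head are attached first, i.e. `h < m < m'` or `h > m > m'` implies `m ≺_h m'` or
`m ≡_h m'`, i.e. the index of `m` is at most that of `m'`. -/
def Nested (D : ODTree L Sg) : Prop :=
  ∀ (h m m' : Fin L) (ℓ ℓ' : Sg) (j j' : ℕ),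
    D.par m = some (h, ℓ, j) → D.par m' = some (h, ℓ', j') →
    ((h < m ∧ m < m') ∨ (m' < m ∧ m < h)) → j ≤ j'

/-- The nesting property for strict orders: `h < m < m'` or `h > m > m'` implies
`m ≺_h m'`, i.e. the index of `m` is strictly smaller than that of `m'`. -/
def NestedStrict (D : ODTree L Sg) : Prop :=
  ∀ (h m m' : Fin L) (ℓ ℓ' : Sg) (j j' : ℕ),
    D.par m = some (h, ℓ, j) → D.par m' = some (h, ℓ', j') →
    ((h < m ∧ m < m') ∨ (m' < m ∧ m < h)) → j < j'

end ODTree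

/-- `D` is the head-ordered dependency projection of the c-tree `C`:
`D` has an arc `(h, m)` with label `Z` and order index `j` exactly when some proper
node `n` of `C` with label `Z` and head `h` has a non-head child headed `m`, and `j`
is the position of `n` among the attachment nodes of `h`'s spine, counted from the
bottom (so modifiers attaching at lower spine nodes get smaller indices, and
modifiers attaching at the same spine node get the same index). -/
def IsProjection {L : ℕ} {Sg : Type} (C : CNode L Sg) (D : ODTree L Sg) : Prop :=
  ∀ (h m : Fin L) (ℓ : Sg) (j : ℕ),
    D.par m = some (h, ℓ, j) ↔ ∃ n, CNode.AttachesAt C h m ℓ n ∧ j = CNode.spineIdx h n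

namespace Stmt13Aux

open CNode

variable {L : ℕ} {Sg : Type}

lemma self_mem_subs (t : CNode L Sg) : t ∈ t.subs := by
  cases t <;> simp [CNode.subs]

lemma mem_subsList {s : CNode L Sg} : ∀ {cs : List (CNode L Sg)},
    s ∈ subsList cs ↔ ∃ c ∈ cs, s ∈ c.subs
  | [] => by simp [CNode.subsList]
  | c :: cs => by
      simp [CNode.subsList, List.mem_append, mem_subsList (cs := cs)]

lemma subsList_sub : ∀ {cs : List (CNode L Sg)} {c : CNode L Sg}, c ∈ cs →
    List.Sublist c.subs (subsList cs)
  | c' :: cs, c, hc => by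
      rw [CNode.subsList]
      rcases List.mem_cons.mp hc with rfl | hc
      · exact List.sublist_append_left _ _
      · exact (subsList_sub hc).trans (List.sublist_append_right _ _)

lemma yieldList_sub : ∀ {cs : List (CNode L Sg)} {c : CNode L Sg}, c ∈ cs → c.yield ⊆ yieldList cs
  | c' :: cs, c, hc => by
      rw [CNode.yieldList]
      rcases List.mem_cons.mp hc with rfl | hc
      · exact Finset.subset_union_left
      · exact (yieldList_sub hc).trans Finset.subset_union_right

lemma valid_children {Z : Sg} {h : Fin L} {cs : List (CNode L Sg)}
    (hv : Valid (CNode.node Z h cs)) : ∀ c ∈ cs, Valid c := by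
  cases hv with | node _ _ _ hall _ _ => exact hall

lemma valid_pairwise {Z : Sg} {h : Fin L} {cs : List (CNode L Sg)}
    (hv : Valid (CNode.node Z h cs)) :
    cs.Pairwise (fun a b => Disjoint a.yield b.yield) := by
  cases hv with | node _ _ _ _ hpw _ => exact hpw

lemma valid_exu {Z : Sg} {h : Fin L} {cs : List (CNode L Sg)}
    (hv : Valid (CNode.node Z h cs)) : ∃! c, c ∈ cs ∧ head c = h := by
  cases hv with | node _ _ _ _ _ hex => exact hex

lemma subs_sublist : ∀ (t s : CNode L Sg), s ∈ t.subs → List.Sublist s.subs t.subs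
  | pre i, s, hs => by
      simp [CNode.subs] at hs; subst hs; exact List.Sublist.refl _
  | node Z h cs, s, hs => by
      rw [CNode.subs, List.mem_cons] at hs
      rcases hs with rfl | hs
      · exact List.Sublist.refl _
      · obtain ⟨c, hc, hsc⟩ := mem_subsList.mp hs
        have h1 : List.Sublist s.subs c.subs := subs_sublist c s hsc
        have h2 : List.Sublist c.subs (subsList cs) := subsList_sub hc
        rw [CNode.subs]
        exact (h1.trans h2).trans (List.sublist_cons_self _ _)
termination_by t => sizeOf t
decreasing_by simp only [CNode.node.sizeOf_spec]; have := List.sizeOf_lt_of_mem hc; omega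

lemma yield_subset : ∀ (t s : CNode L Sg), s ∈ t.subs → s.yield ⊆ t.yield
  | pre i, s, hs => by
      simp [CNode.subs] at hs; subst hs; exact subset_rfl
  | node Z h cs, s, hs => by
      rw [CNode.subs, List.mem_cons] at hs
      rcases hs with rfl | hs
      · exact subset_rfl
      · obtain ⟨c, hc, hsc⟩ := mem_subsList.mp hs
        have h1 := yield_subset c s hsc
        rw [show (CNode.node Z h cs).yield = yieldList cs from rfl]
        exact h1.trans (yieldList_sub hc)
termination_by t => sizeOf t
decreasing_by simp only [CNode.node.sizeOf_spec]; have := List.sizeOf_lt_of_mem hc; omega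

lemma valid_of_mem : ∀ (t s : CNode L Sg), Valid t → s ∈ t.subs → Valid s
  | pre i, s, hv, hs => by
      simp [CNode.subs] at hs; subst hs; exact hv
  | node Z h cs, s, hv, hs => by
      rw [CNode.subs, List.mem_cons] at hs
      rcases hs with rfl | hs
      · exact hv
      · obtain ⟨c, hc, hsc⟩ := mem_subsList.mp hs
        exact valid_of_mem c s (valid_children hv c hc) hsc
termination_by t => sizeOf t
decreasing_by simp only [CNode.node.sizeOf_spec]; have := List.sizeOf_lt_of_mem hc; omega

lemma head_mem_yield : ∀ (t : CNode L Sg), Valid t → t.head ∈ t.yield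
  | pre i, _ => by simp [CNode.head, CNode.yield]
  | node Z h cs, hv => by
      obtain ⟨c, ⟨hc, hch⟩, _⟩ := valid_exu hv
      have h1 := head_mem_yield c (valid_children hv c hc)
      rw [hch] at h1
      exact yieldList_sub hc h1
termination_by t => sizeOf t
decreasing_by simp only [CNode.node.sizeOf_spec]; have := List.sizeOf_lt_of_mem hc; omega

lemma nesting : ∀ (t : CNode L Sg), Valid t → ∀ s1 ∈ t.subs, ∀ s2 ∈ t.subs,
    s1 ∈ s2.subs ∨ s2 ∈ s1.subs ∨ Disjoint s1.yield s2.yield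
  | pre i, _, s1, h1, s2, h2 => by
      simp [CNode.subs] at h1 h2; subst h1; subst h2
      left; exact self_mem_subs _
  | node Z h cs, hv, s1, h1, s2, h2 => by
      rw [CNode.subs, List.mem_cons] at h1 h2
      rcases h1 with rfl | h1
      · right; left
        rw [CNode.subs, List.mem_cons]; exact h2
      · rcases h2 with rfl | h2
        · left
          rw [CNode.subs, List.mem_cons]; right; exact h1
        · obtain ⟨c1, hc1, hs1⟩ := mem_subsList.mp h1
          obtain ⟨c2, hc2, hs2⟩ := mem_subsList.mp h2
          by_cases hcc : c1 = c2
          · subst hcc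
            exact nesting c1 (valid_children hv c1 hc1) s1 hs1 s2 hs2
          · right; right
            have hd : Disjoint c1.yield c2.yield := by
              have hsymm : Symmetric (fun a b : CNode L Sg => Disjoint a.yield b.yield) :=
                fun a b hab => hab.symm
              haveI : Std.Symm (fun a b : CNode L Sg => Disjoint a.yield b.yield) := ⟨hsymm⟩
              exact (valid_pairwise hv).forall hc1 hc2 hcc
            exact hd.mono (yield_subset _ _ hs1) (yield_subset _ _ hs2)
termination_by t => sizeOf t
decreasing_by simp only [CNode.node.sizeOf_spec]; have := List.sizeOf_lt_of_mem hc1; omega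

lemma exists_nonhead {Z : Sg} {h : Fin L} {cs : List (CNode L Sg)}
    (hv : Valid (CNode.node Z h cs)) (hlen : cs.length ≠ 1) :
    ∃ c ∈ cs, head c ≠ h := by
  obtain ⟨c0, ⟨hc0, hch0⟩, huniq⟩ := valid_exu hv
  rcases cs with _ | ⟨a, _ | ⟨b, rest⟩⟩
  · exact absurd hc0 List.not_mem_nil
  · simp at hlen
  · by_cases ha : head a = h
    · by_cases hb : head b = h
      · exfalso
        have hab : a = b := by
          have e1 := huniq a ⟨by simp, ha⟩
          have e2 := huniq b ⟨by simp, hb⟩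
          rw [e1, e2]
        have hd : Disjoint a.yield b.yield :=
          (List.rel_of_pairwise_cons (valid_pairwise hv)) (by simp)
        rw [hab] at hd
        have hy : head b ∈ b.yield := head_mem_yield b (valid_children hv b (by simp))
        exact (Finset.disjoint_left.mp hd hy) hy
      · exact ⟨b, by simp, hb⟩
    · exact ⟨a, by simp, ha⟩

lemma attachB_eq_true {Z : Sg} {h : Fin L} {cs : List (CNode L Sg)}
    (hv : Valid (CNode.node Z h cs)) (hlen : cs.length ≠ 1) :
    attachB h (CNode.node Z h cs) = true := by
  obtain ⟨c, hc, hch⟩ := exists_nonhead hv hlen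
  simp only [CNode.attachB, Bool.and_eq_true, decide_eq_true_eq, List.any_eq_true]
  exact ⟨by simp, c, hc, by simpa using hch⟩

lemma spineIdx_lt_of_mem {h : Fin L} {s t : CNode L Sg} (hst : s ∈ t.subs) (hne : s ≠ t)
    (hat : attachB h t = true) : spineIdx h s < spineIdx h t := by
  cases t with
  | pre i =>
      simp [CNode.subs] at hst; exact absurd hst hne
  | node Z h' cs =>
      rw [CNode.subs, List.mem_cons] at hst
      rcases hst with rfl | hst
      · exact absurd rfl hne
      · obtain ⟨c, hc, hsc⟩ := mem_subsList.mp hst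
        have h1 : spineIdx h s ≤ (subsList cs).countP (attachB h) :=
          List.Sublist.countP_le ((subs_sublist c s hsc).trans (subsList_sub hc))
        have h2 : spineIdx h (CNode.node Z h' cs) = (subsList cs).countP (attachB h) + 1 := by
          rw [CNode.spineIdx, CNode.subs, List.countP_cons]; simp [hat]
        omega

lemma spineIdx_inj {C : CNode L Sg} (hC : Valid C) (hU : Unaryless C) {h : Fin L}
    {s1 s2 : CNode L Sg} (h1 : s1 ∈ C.subs) (h2 : s2 ∈ C.subs)
    {Z1 : Sg} {cs1 : List (CNode L Sg)} {Z2 : Sg} {cs2 : List (CNode L Sg)}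
    (e1 : s1 = CNode.node Z1 h cs1) (e2 : s2 = CNode.node Z2 h cs2)
    (hidx : spineIdx h s1 = spineIdx h s2) : s1 = s2 := by
  have hv1 : Valid s1 := valid_of_mem _ _ hC h1
  have hv2 : Valid s2 := valid_of_mem _ _ hC h2
  have ha1 : attachB h s1 = true := by
    rw [e1]; exact attachB_eq_true (e1 ▸ hv1) (hU _ h1 _ _ _ e1)
  have ha2 : attachB h s2 = true := by
    rw [e2]; exact attachB_eq_true (e2 ▸ hv2) (hU _ h2 _ _ _ e2)
  have hy1 : h ∈ s1.yield := by
    have := head_mem_yield s1 hv1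
    rwa [show s1.head = h by rw [e1]; rfl] at this
  have hy2 : h ∈ s2.yield := by
    have := head_mem_yield s2 hv2
    rwa [show s2.head = h by rw [e2]; rfl] at this
  by_contra hne
  rcases nesting C hC s1 h1 s2 h2 with hmem | hmem | hdis
  · exact absurd hidx (Nat.ne_of_lt (spineIdx_lt_of_mem hmem hne ha2))
  · exact absurd hidx.symm (Nat.ne_of_lt (spineIdx_lt_of_mem hmem (Ne.symm hne) ha1))
  · exact (Finset.disjoint_left.mp hdis hy1) hy2

end Stmt13Aux


namespace Stmt13Aux

variable {L : ℕ} {Sg : Type}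

lemma arc_iff {D : ODTree L Sg} {h m : Fin L} :
    D.arc h m ↔ ∃ ℓ j, D.par m = some (h, ℓ, j) := by
  unfold ODTree.arc
  cases hp : D.par m with
  | none => simp
  | some x =>
      obtain ⟨h', ℓ, j⟩ := x
      simp only [Option.map_some, Option.some.injEq, Prod.mk.injEq]
      constructor
      · rintro rfl; exact ⟨ℓ, j, rfl, rfl, rfl⟩
      · rintro ⟨ℓ', j', rfl, -, -⟩; rfl

lemma key_exists {C : CNode L Sg} {D : ODTree L Sg} (hC : CNode.Valid C)
    (hU : CNode.Unaryless C) (hproj : IsProjection C D) {h : Fin L} {s : CNode L Sg}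
    (hs : s ∈ C.subs) {Z : Sg} {cs : List (CNode L Sg)} (e : s = CNode.node Z h cs) :
    ∃ m ℓ, D.par m = some (h, ℓ, CNode.spineIdx h s) := by
  have hv : CNode.Valid s := valid_of_mem _ _ hC hs
  have hlen := hU _ hs _ _ _ e
  obtain ⟨c, hc, hch⟩ := exists_nonhead (e ▸ hv) hlen
  exact ⟨CNode.head c, Z,
    (hproj h (CNode.head c) Z _).mpr ⟨s, ⟨hs, cs, e, hch, c, hc, rfl⟩, rfl⟩⟩

end Stmt13Aux


/-- Let `C` be an unaryless c-tree and `D` its head-ordered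
dependency projection.  Then for every position `h`, the number of proper nodes of
`C` whose lexical head is `h` equals the number of equivalence classes of the weak
order on `M_h` in `D` (i.e. the number of distinct order indices occurring on the
arcs out of `h`); in particular it equals `0` when `M_h` is empty, and for a binary
c-tree it equals `|M_h|`. -/
theorem stmt13 (L : ℕ) (Sg P : Type) [Fintype Sg] (pos : Fin L → P)
    (C : CNode L Sg) (hC : CNode.IsCTree C) (hU : CNode.Unaryless C)
    (D : ODTree L Sg) (hproj : IsProjection C D) (h : Fin L) :
    Nat.card {s : CNode L Sg // s ∈ C.subs ∧ ∃ Z cs, s = CNode.node Z h cs} =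
      Nat.card {j : ℕ // ∃ m ℓ, D.par m = some (h, ℓ, j)} ∧
    ((∀ m : Fin L, ¬ D.arc h m) →
      Nat.card {s : CNode L Sg // s ∈ C.subs ∧ ∃ Z cs, s = CNode.node Z h cs} = 0) ∧
    (CNode.Binary C →
      Nat.card {s : CNode L Sg // s ∈ C.subs ∧ ∃ Z cs, s = CNode.node Z h cs} =
        Nat.card {m : Fin L // D.arc h m}) := by

  classical
  open Stmt13Aux in
  have hCv : CNode.Valid C := hC.1
  -- part 1 equivalence
  have hf : ∀ x : {s : CNode L Sg // s ∈ C.subs ∧ ∃ Z cs, s = CNode.node Z h cs},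
      ∃ m ℓ, D.par m = some (h, ℓ, CNode.spineIdx h x.1) := by
    rintro ⟨s, hs, Z, cs, e⟩
    exact key_exists hCv hU hproj hs e
  let f : {s : CNode L Sg // s ∈ C.subs ∧ ∃ Z cs, s = CNode.node Z h cs} →
      {j : ℕ // ∃ m ℓ, D.par m = some (h, ℓ, j)} :=
    fun x => ⟨CNode.spineIdx h x.1, hf x⟩
  have finj : Function.Injective f := by
    rintro ⟨s1, h1, Z1, cs1, e1⟩ ⟨s2, h2, Z2, cs2, e2⟩ hfe
    have : CNode.spineIdx h s1 = CNode.spineIdx h s2 := congrArg Subtype.val hfe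
    exact Subtype.ext (spineIdx_inj hCv hU h1 h2 e1 e2 this)
  have fsurj : Function.Surjective f := by
    rintro ⟨j, m, ℓ, hpar⟩
    obtain ⟨n, ⟨hnC, cs, e, hmh, hcex⟩, hj⟩ := (hproj h m ℓ j).mp hpar
    exact ⟨⟨n, hnC, ℓ, cs, e⟩, Subtype.ext hj.symm⟩
  have part1 :
      Nat.card {s : CNode L Sg // s ∈ C.subs ∧ ∃ Z cs, s = CNode.node Z h cs} =
        Nat.card {j : ℕ // ∃ m ℓ, D.par m = some (h, ℓ, j)} :=
    Nat.card_congr (Equiv.ofBijective f ⟨finj, fsurj⟩)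
  refine ⟨part1, ?_, ?_⟩
  · -- empty case
    intro hno
    have : IsEmpty {s : CNode L Sg // s ∈ C.subs ∧ ∃ Z cs, s = CNode.node Z h cs} := by
      refine ⟨?_⟩
      rintro ⟨s, hs, Z, cs, e⟩
      obtain ⟨m, ℓ, hpar⟩ := key_exists hCv hU hproj hs e
      exact hno m (by unfold ODTree.arc; rw [hpar]; rfl)
    exact Nat.card_of_isEmpty
  · -- binary case
    intro hB
    have samej : ∀ m m' (ℓ ℓ' : Sg) j, D.par m = some (h, ℓ, j) →
        D.par m' = some (h, ℓ', j) → m = m' := by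
      intro m m' ℓ ℓ' j hp hp'
      obtain ⟨n, ⟨hnC, cs, e, hmh, c, hc, hcm⟩, hj⟩ := (hproj h m ℓ j).mp hp
      obtain ⟨n', ⟨hn'C, cs', e', hm'h, c', hc', hcm'⟩, hj'⟩ := (hproj h m' ℓ' j).mp hp'
      have hnn : n = n' := spineIdx_inj hCv hU hnC hn'C e e' (by omega)
      subst hnn
      rw [e] at e'
      obtain ⟨rfl, -, rfl⟩ : ℓ = ℓ' ∧ h = h ∧ cs = cs' := by
        simpa [CNode.node.injEq] using e'
      have hlen : cs.length = 2 := hB n hnC ℓ h cs e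
      have hv : CNode.Valid (CNode.node ℓ h cs) := e ▸ valid_of_mem _ _ hCv hnC
      obtain ⟨c0, ⟨hc0, hch0⟩, -⟩ := valid_exu hv
      rcases cs with _ | ⟨a, _ | ⟨b, _ | rest⟩⟩ <;> simp at hlen
      simp only [List.mem_cons, List.not_mem_nil, or_false] at hc hc' hc0
      by_cases ha : CNode.head a = h
      · have hcb : c = b := by
          rcases hc with rfl | rfl
          · exact absurd (hcm ▸ ha) hmh
          · rfl
        have hcb' : c' = b := by
          rcases hc' with rfl | rfl
          · exact absurd (hcm' ▸ ha) hm'h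
          · rfl
        rw [← hcm, ← hcm', hcb, hcb']
      · have hb : CNode.head b = h := by
          rcases hc0 with rfl | rfl
          · exact absurd hch0 ha
          · exact hch0
        have hca : c = a := by
          rcases hc with rfl | rfl
          · rfl
          · exact absurd (hcm ▸ hb) hmh
        have hca' : c' = a := by
          rcases hc' with rfl | rfl
          · rfl
          · exact absurd (hcm' ▸ hb) hm'h
        rw [← hcm, ← hcm', hca, hca']
    let g : {j : ℕ // ∃ m ℓ, D.par m = some (h, ℓ, j)} → {m : Fin L // D.arc h m} :=
      fun x => ⟨x.2.choose, by
        obtain ⟨ℓ, hp⟩ := x.2.choose_spec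
        exact arc_iff.mpr ⟨ℓ, x.1, hp⟩⟩
    have ginj : Function.Injective g := by
      rintro ⟨j1, hj1⟩ ⟨j2, hj2⟩ hge
      have hme : hj1.choose = hj2.choose := congrArg Subtype.val hge
      obtain ⟨ℓ1, hp1⟩ := hj1.choose_spec
      obtain ⟨ℓ2, hp2⟩ := hj2.choose_spec
      rw [hme, hp2] at hp1
      have := Option.some.inj hp1
      exact Subtype.ext (by simpa using (congrArg (fun y => y.2.2) this).symm)
    have gsurj : Function.Surjective g := by
      rintro ⟨m, hm⟩
      obtain ⟨ℓ, j, hp⟩ := arc_iff.mp hm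
      refine ⟨⟨j, m, ℓ, hp⟩, Subtype.ext ?_⟩
      obtain ⟨ℓ0, hp0⟩ := (⟨m, ℓ, hp⟩ : ∃ m ℓ, D.par m = some (h, ℓ, j)).choose_spec
      exact samej _ _ ℓ0 ℓ j hp0 hp
    exact part1.trans (Nat.card_congr (Equiv.ofBijective g ⟨ginj, gsurj⟩))
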